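/- For every integer n ≥ 0 and every z in the vertical strip T_{−n−1,−n} = {z ∈ ℂ : −n−1 < Re z < −n}, the Gamma function satisfies Γ(z) = ∫_{−∞}^{+∞} e^{−zt} (∑_{m=n+1}^{∞} ((−1)^m / m!) e^{−mt}) dt; consequently (−1)^{n+1} Γ is co-positive definite on T_{−n−1,−n}, i.e. Γ is co-negative definite on T_{−n−1,−n} when n is even and co-positive definite there when n is odd. -/

import Mathlib

open Complex MeasureTheory Filter Set Topology
open scoped Real BigOperators ComplexOrder

noncomputable section

/-- `f : ℝ → ℂ` is positive definite. -/
def IsPosDefFun (f : ℝ → ℂ) : Prop :=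
  ∀ (n : ℕ) (x : Fin n → ℝ) (ξ : Fin n → ℂ),
    0 ≤ ∑ k, ∑ l, f (x k - x l) * ξ k * (starRingEnd ℂ) (ξ l)

/-- `f` is positive definite on `S ⊆ ℂ`. -/
def IsPosDefOnC (f : ℂ → ℂ) (S : Set ℂ) : Prop :=
  ∀ (n : ℕ) (z : Fin n → ℂ), (∀ k l, z k - (starRingEnd ℂ) (z l) ∈ S) →
    ∀ ξ : Fin n → ℂ,
      0 ≤ ∑ k, ∑ l, f (z k - (starRingEnd ℂ) (z l)) * ξ k * (starRingEnd ℂ) (ξ l)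

/-- `f` is co-positive definite on `T ⊆ ℂ`. -/
def IsCoPosDefOnC (f : ℂ → ℂ) (T : Set ℂ) : Prop :=
  ∀ (n : ℕ) (z : Fin n → ℂ), (∀ k l, z k + (starRingEnd ℂ) (z l) ∈ T) →
    ∀ ξ : Fin n → ℂ,
      0 ≤ ∑ k, ∑ l, f (z k + (starRingEnd ℂ) (z l)) * ξ k * (starRingEnd ℂ) (ξ l)

/-- `G : ℝ → ℂ` is co-positive definite on `I ⊆ ℝ`. -/
def IsCoPosDefOnR (G : ℝ → ℂ) (I : Set ℝ) : Prop :=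
  ∀ (n : ℕ) (x : Fin n → ℝ), (∀ k l, x k + x l ∈ I) →
    ∀ ξ : Fin n → ℂ,
      0 ≤ ∑ k, ∑ l, G (x k + x l) * ξ k * (starRingEnd ℂ) (ξ l)

/-- Horizontal strip `S_{a,b}`. -/
def HStrip (a b : EReal) : Set ℂ := {z | a < (z.im : EReal) ∧ (z.im : EReal) < b}

/-- Vertical strip `T_{a,b}`. -/
def VStrip (a b : EReal) : Set ℂ := {z | a < (z.re : EReal) ∧ (z.re : EReal) < b}

/-- `μ` is exponentially finite with respect to the interval `(a,b)`. -/
def ExpFinite (μ : Measure ℝ) (a b : EReal) : Prop :=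
  ∀ y : ℝ, a < (y : EReal) → (y : EReal) < b →
    Integrable (fun t : ℝ => Real.exp (-y * t)) μ

def Gtail (k : ℕ) (t : ℝ) : ℝ :=
  Real.exp (-Real.exp (-t)) - ∑ m ∈ Finset.range k, (-1 : ℝ) ^ m / m.factorial * Real.exp (-(m : ℝ) * t)

lemma coef_summable (t : ℝ) :
    Summable (fun m : ℕ => (-1 : ℝ) ^ m / m.factorial * Real.exp (-(m : ℝ) * t)) := by
  have h := Real.summable_pow_div_factorial (Real.exp (-t))
  apply h.of_norm_bounded
  intro m
  rw [Real.norm_eq_abs, abs_mul, abs_div, _root_.abs_pow, abs_neg, abs_one, one_pow, Nat.abs_cast,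
    _root_.abs_of_nonneg (Real.exp_nonneg _),
    show -(m : ℝ) * t = (m : ℝ) * (-t) by ring, Real.exp_nat_mul]
  exact le_of_eq (by ring)

lemma exp_series (x : ℝ) : Real.exp x = ∑' m : ℕ, x ^ m / m.factorial := by
  rw [Real.exp_eq_exp_ℝ, NormedSpace.exp_eq_tsum_div]

lemma tsum_coef (t : ℝ) :
    (∑' m : ℕ, (-1 : ℝ) ^ m / m.factorial * Real.exp (-(m : ℝ) * t)) = Real.exp (-Real.exp (-t)) := by
  rw [exp_series]
  congr 1
  funext m
  rw [show -(m : ℝ) * t = (m : ℝ) * (-t) by ring, Real.exp_nat_mul]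
  rw [show (-Real.exp (-t)) ^ m = (-1 : ℝ) ^ m * Real.exp (-t) ^ m by rw [← neg_one_mul, mul_pow]]
  ring

lemma tail_eq (k : ℕ) (t : ℝ) :
    (∑' m : ℕ, if k ≤ m then (-1 : ℝ) ^ m / m.factorial * Real.exp (-(m : ℝ) * t) else 0)
      = Gtail k t := by
  set a : ℕ → ℝ := fun m => (-1 : ℝ) ^ m / m.factorial * Real.exp (-(m : ℝ) * t) with ha
  have hs : Summable a := coef_summable t
  have hlt : Summable (fun m => if m < k then a m else 0) :=
    summable_of_finite_support (by
      apply Set.Finite.subset (Set.finite_Iio k)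
      intro m hm
      simp only [Function.mem_support] at hm
      by_contra h
      simp only [Set.mem_Iio, not_lt] at h
      simp [Nat.not_lt.mpr h] at hm)
  have hpt : (fun m => if k ≤ m then a m else 0) = fun m => a m - (if m < k then a m else 0) := by
    funext m
    by_cases h : k ≤ m
    · simp [h, Nat.not_lt.mpr h]
    · simp [h, Nat.lt_of_not_le h]
  have h1 : (∑' m : ℕ, if m < k then a m else 0) = ∑ m ∈ Finset.range k, a m := by
    rw [tsum_eq_sum (s := Finset.range k) (f := fun m => if m < k then a m else 0)
      (by intro m hm; simp only [Finset.mem_range, not_lt] at hm; simp [Nat.not_lt.mpr hm])]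
    apply Finset.sum_congr rfl
    intro m hm
    simp only [Finset.mem_range] at hm
    simp [hm]
  rw [hpt, Summable.tsum_sub hs hlt, h1, tsum_coef]
  rfl

lemma Gtail_continuous (k : ℕ) : Continuous (Gtail k) := by
  unfold Gtail
  apply Continuous.sub
  · exact (Real.continuous_exp.comp continuous_neg).neg.rexp
  · apply continuous_finset_sum
    intro m _
    exact continuous_const.mul (Real.continuous_exp.comp (continuous_const.mul continuous_id))

lemma Gtail_hasDerivAt (k : ℕ) (t : ℝ) :
    HasDerivAt (Gtail (k + 1)) (Real.exp (-t) * Gtail k t) t := by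
  have h1 : HasDerivAt (fun t : ℝ => Real.exp (-Real.exp (-t)))
      (Real.exp (-Real.exp (-t)) * Real.exp (-t)) t := by
    have hinner : HasDerivAt (fun t : ℝ => -Real.exp (-t)) (Real.exp (-t)) t := by
      have := ((hasDerivAt_id t).fun_neg.exp).fun_neg
      simpa using this
    simpa using hinner.exp
  have h2 : ∀ m : ℕ, HasDerivAt (fun t : ℝ => (-1 : ℝ) ^ m / m.factorial * Real.exp (-(m : ℝ) * t))
      ((-1 : ℝ) ^ m / m.factorial * (-(m : ℝ)) * Real.exp (-(m : ℝ) * t)) t := by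
    intro m
    have : HasDerivAt (fun t : ℝ => Real.exp (-(m : ℝ) * t)) (Real.exp (-(m:ℝ)*t) * (-(m:ℝ))) t := by
      have := ((hasDerivAt_id t).const_mul (-(m:ℝ))).exp
      simpa using this
    have := this.const_mul ((-1 : ℝ) ^ m / m.factorial)
    refine this.congr_deriv (Eq.symm ?_)
    ring
  have hsum : HasDerivAt (fun t : ℝ => ∑ m ∈ Finset.range (k+1),
      (-1 : ℝ) ^ m / m.factorial * Real.exp (-(m : ℝ) * t))
      (∑ m ∈ Finset.range (k+1), (-1 : ℝ) ^ m / m.factorial * (-(m : ℝ)) * Real.exp (-(m : ℝ) * t)) t :=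
    HasDerivAt.fun_sum (fun m _ => h2 m)
  have := h1.fun_sub hsum
  refine this.congr_deriv (Eq.symm ?_)
  rw [Finset.sum_range_succ']
  simp only [Nat.cast_zero, neg_zero, zero_mul, mul_zero, Real.exp_zero]
  rw [Gtail, mul_sub, Finset.mul_sum]
  rw [add_zero, mul_comm (Real.exp (-t)) (Real.exp (-Real.exp (-t)))]
  congr 1
  apply Finset.sum_congr rfl
  intro j _
  rw [Nat.factorial_succ, pow_succ,
    show -(((j:ℕ)+1 : ℕ) : ℝ)*t = -t + -(j:ℝ)*t by push_cast; ring, Real.exp_add]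
  have hne : ((j:ℝ)+1) ≠ 0 := by positivity
  push_cast
  field_simp

lemma Gtail_tendsto_atTop (k : ℕ) : Tendsto (Gtail (k + 1)) atTop (𝓝 0) := by
  unfold Gtail
  have h1 : Tendsto (fun t : ℝ => Real.exp (-Real.exp (-t))) atTop (𝓝 1) := by
    have : Tendsto (fun t : ℝ => -Real.exp (-t)) atTop (𝓝 0) := by
      simpa using (Real.tendsto_exp_atBot.comp tendsto_neg_atTop_atBot).neg
    simpa [Function.comp_def] using (Real.continuous_exp.continuousAt (x := 0)).tendsto.comp this
  have h2 : Tendsto (fun t : ℝ => ∑ m ∈ Finset.range (k+1),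
      (-1 : ℝ) ^ m / m.factorial * Real.exp (-(m : ℝ) * t)) atTop (𝓝 1) := by
    have hterm : ∀ m : ℕ, Tendsto (fun t : ℝ => (-1 : ℝ) ^ m / m.factorial * Real.exp (-(m : ℝ) * t))
        atTop (𝓝 (if m = 0 then 1 else 0)) := by
      intro m
      rcases Nat.eq_zero_or_pos m with hm | hm
      · subst hm; simp
      · have hmt : Tendsto (fun t : ℝ => -(m:ℝ) * t) atTop atBot := by
          have h' : Tendsto (fun t : ℝ => (m:ℝ) * t) atTop atTop :=
            Tendsto.const_mul_atTop (by positivity) tendsto_id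
          have heq : (fun t : ℝ => -(m:ℝ) * t) = (fun x : ℝ => -x) ∘ (fun t : ℝ => (m:ℝ) * t) := by
            funext t; simp [neg_mul]
          rw [heq]
          exact tendsto_neg_atTop_atBot.comp h'
        have : Tendsto (fun t : ℝ => Real.exp (-(m:ℝ) * t)) atTop (𝓝 0) :=
          Real.tendsto_exp_atBot.comp hmt
        have := this.const_mul ((-1 : ℝ) ^ m / m.factorial)
        simp only [mul_zero] at this
        simpa [Nat.pos_iff_ne_zero.mp hm] using this
    have hsum := tendsto_finset_sum (Finset.range (k+1)) (fun m _ => hterm m)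
    have hval : (∑ m ∈ Finset.range (k+1), if m = 0 then (1:ℝ) else 0) = 1 := by
      rw [Finset.sum_ite_eq' (Finset.range (k+1)) 0 (fun _ => (1:ℝ))]
      simp
    rw [hval] at hsum
    exact hsum
  have := h1.sub h2
  simpa using this

lemma Gtail_nonneg (k : ℕ) (t : ℝ) : 0 ≤ (-1 : ℝ) ^ k * Gtail k t := by
  induction k generalizing t with
  | zero => simp [Gtail, Real.exp_nonneg]
  | succ k ih =>
    have hanti : Antitone (fun t => (-1 : ℝ) ^ (k+1) * Gtail (k+1) t) := by
      apply antitone_of_deriv_nonpos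
      · intro t
        exact ((Gtail_hasDerivAt k t).const_mul _).differentiableAt
      · intro t
        rw [((Gtail_hasDerivAt k t).const_mul ((-1:ℝ)^(k+1))).deriv]
        have : (-1:ℝ)^(k+1) * (Real.exp (-t) * Gtail k t) = -(Real.exp (-t) * ((-1:ℝ)^k * Gtail k t)) := by
          rw [pow_succ]; ring
        rw [this]
        exact neg_nonpos.mpr (mul_nonneg (Real.exp_nonneg _) (ih t))
    have hlim : Tendsto (fun t => (-1 : ℝ) ^ (k+1) * Gtail (k+1) t) atTop (𝓝 0) := by
      simpa using (Gtail_tendsto_atTop k).const_mul ((-1:ℝ)^(k+1))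
    exact hanti.le_of_tendsto hlim t

lemma Gtail_eq_tsum_shift (k : ℕ) (t : ℝ) :
    Gtail k t = ∑' i : ℕ, (-1 : ℝ) ^ (i + k) / (i + k).factorial * Real.exp (-((i:ℝ) + k) * t) := by
  have hs := coef_summable t
  have h := Summable.sum_add_tsum_nat_add k hs
  rw [tsum_coef] at h
  have h2 : (∑' i : ℕ, (-1 : ℝ) ^ (i + k) / (i + k).factorial * Real.exp (-((i:ℝ) + (k:ℝ)) * t))
      = ∑' i : ℕ, (-1 : ℝ) ^ (i + k) / (i + k).factorial * Real.exp (-((i + k : ℕ) : ℝ) * t) := by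
    congr 1; funext i; push_cast; ring_nf
  unfold Gtail
  rw [h2]
  linarith [h]

/-- bound for `t ≥ 0` -/

lemma Gtail_bound_pos (k : ℕ) {t : ℝ} (ht : 0 ≤ t) :
    |Gtail k t| ≤ Real.exp 1 * Real.exp (-(k : ℝ) * t) := by
  rw [Gtail_eq_tsum_shift]
  have hb : ∀ i : ℕ, |(-1 : ℝ) ^ (i + k) / (i + k).factorial * Real.exp (-((i:ℝ) + k) * t)|
      ≤ (1 / i.factorial) * Real.exp (-(k:ℝ) * t) := by
    intro i
    rw [abs_mul, abs_div, _root_.abs_pow, abs_neg, abs_one, one_pow, Nat.abs_cast,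
      _root_.abs_of_nonneg (Real.exp_nonneg _)]
    apply mul_le_mul
    · apply one_div_le_one_div_of_le (by positivity)
      exact_mod_cast Nat.factorial_le (Nat.le_add_right i k)
    · apply Real.exp_le_exp.mpr
      nlinarith [mul_nonneg (Nat.cast_nonneg i : (0:ℝ) ≤ (i:ℝ)) ht]
    · exact Real.exp_nonneg _
    · positivity
  have hsum : Summable (fun i : ℕ => (1 / i.factorial : ℝ) * Real.exp (-(k:ℝ) * t)) := by
    apply Summable.mul_right
    simpa using Real.summable_pow_div_factorial 1
  have hsa : Summable (fun i : ℕ =>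
      ‖(-1 : ℝ) ^ (i + k) / (i + k).factorial * Real.exp (-((i:ℝ) + k) * t)‖) := by
    apply hsum.of_nonneg_of_le (fun i => norm_nonneg _)
    intro i
    rw [Real.norm_eq_abs]
    exact hb i
  calc |∑' i : ℕ, (-1 : ℝ) ^ (i + k) / (i + k).factorial * Real.exp (-((i:ℝ) + k) * t)|
      ≤ ∑' i : ℕ, ‖(-1 : ℝ) ^ (i + k) / (i + k).factorial * Real.exp (-((i:ℝ) + k) * t)‖ := by
        rw [← Real.norm_eq_abs]
        exact norm_tsum_le_tsum_norm hsa
    _ ≤ ∑' i : ℕ, (1 / i.factorial : ℝ) * Real.exp (-(k:ℝ) * t) := by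
        apply Summable.tsum_le_tsum _ hsa hsum
        intro i
        rw [Real.norm_eq_abs]
        exact hb i
    _ = Real.exp 1 * Real.exp (-(k:ℝ)*t) := by
        rw [tsum_mul_right]
        congr 1
        rw [exp_series 1]
        simp

/-- bound for `t ≤ 0` -/

lemma Gtail_bound_neg (k : ℕ) {t : ℝ} (ht : t ≤ 0) :
    |Gtail k t| ≤ ((k : ℝ) + 1) * Real.exp (-((k : ℝ) - 1) * t) := by
  set E := Real.exp (-((k : ℝ) - 1) * t) with hE
  have hE1 : Real.exp (-Real.exp (-t)) ≤ E := by
    have h1 : Real.exp (-Real.exp (-t)) ≤ Real.exp t := by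
      apply Real.exp_le_exp.mpr
      nlinarith [Real.add_one_le_exp (-t)]
    apply h1.trans
    apply Real.exp_le_exp.mpr
    nlinarith [(Nat.cast_nonneg k : (0:ℝ) ≤ (k:ℝ))]
  have hE2 : ∀ m ∈ Finset.range k,
      |(-1 : ℝ) ^ m / m.factorial * Real.exp (-(m : ℝ) * t)| ≤ E := by
    intro m hm
    rw [abs_mul, abs_div, _root_.abs_pow, abs_neg, abs_one, one_pow, Nat.abs_cast,
      _root_.abs_of_nonneg (Real.exp_nonneg _)]
    have h1 : (1:ℝ) / m.factorial ≤ 1 := by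
      rw [div_le_one (by positivity)]
      exact_mod_cast Nat.one_le_iff_ne_zero.mpr (Nat.factorial_ne_zero m)
    have h2 : Real.exp (-(m:ℝ) * t) ≤ E := by
      apply Real.exp_le_exp.mpr
      have hmk : (m : ℝ) ≤ (k:ℝ) - 1 := by
        have := Finset.mem_range.mp hm
        have : (m:ℝ) + 1 ≤ (k:ℝ) := by exact_mod_cast this
        linarith
      nlinarith
    calc 1 / (m.factorial:ℝ) * Real.exp (-(m:ℝ)*t) ≤ 1 * Real.exp (-(m:ℝ)*t) := by
          apply mul_le_mul_of_nonneg_right h1 (Real.exp_nonneg _)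
      _ = Real.exp (-(m:ℝ)*t) := one_mul _
      _ ≤ E := h2
  have hEpos : 0 ≤ E := Real.exp_nonneg _
  calc |Gtail k t| ≤ |Real.exp (-Real.exp (-t))|
        + |∑ m ∈ Finset.range k, (-1 : ℝ) ^ m / m.factorial * Real.exp (-(m : ℝ) * t)| :=
        by
          have : Gtail k t = Real.exp (-Real.exp (-t))
              - ∑ m ∈ Finset.range k, (-1 : ℝ) ^ m / m.factorial * Real.exp (-(m : ℝ) * t) := rfl
          rw [this]
          exact abs_sub _ _
    _ ≤ E + ∑ m ∈ Finset.range k, |(-1 : ℝ) ^ m / m.factorial * Real.exp (-(m : ℝ) * t)| := by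
        apply add_le_add
        · rwa [_root_.abs_of_nonneg (Real.exp_nonneg _)]
        · exact Finset.abs_sum_le_sum_abs _ _
    _ ≤ E + ∑ m ∈ Finset.range k, E := add_le_add_right (Finset.sum_le_sum hE2) E
    _ = ((k:ℝ) + 1) * E := by
        rw [Finset.sum_const, Finset.card_range]
        push_cast
        ring

lemma integrableOn_exp_mul_Iic' {c : ℝ} (hc : 0 < c) (a : ℝ) :
    IntegrableOn (fun t : ℝ => Real.exp (c * t)) (Iic a) := by
  have h := exp_neg_integrableOn_Ioi (-a) hc
  have h2 : Integrable ((Ioi (-a)).indicator fun x => Real.exp (-c * x)) :=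
    (integrable_indicator_iff measurableSet_Ioi).2 h
  have h3 := h2.comp_neg
  have heq : ((Iio a).indicator fun t : ℝ => Real.exp (c * t))
      = fun x : ℝ => ((Ioi (-a)).indicator fun y => Real.exp (-c * y)) (-x) := by
    funext x
    by_cases hx : x < a
    · rw [indicator_of_mem (mem_Iio.mpr hx), indicator_of_mem (by simpa using hx)]
      ring_nf
    · rw [indicator_of_notMem (by simpa using hx), indicator_of_notMem (by simpa using hx)]
  have h4 : Integrable ((Iio a).indicator fun t : ℝ => Real.exp (c * t)) := by
    rw [heq]; exact h3
  have h5 : IntegrableOn (fun t : ℝ => Real.exp (c * t)) (Iio a) :=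
    (integrable_indicator_iff measurableSet_Iio).1 h4
  rwa [← integrableOn_Iic_iff_integrableOn_Iio] at h5

lemma norm_cexp_mul (z : ℂ) (t : ℝ) (r : ℝ) :
    ‖Complex.exp (-z * t) * (r : ℂ)‖ = Real.exp (-z.re * t) * |r| := by
  rw [norm_mul, Complex.norm_exp, Complex.norm_real, Real.norm_eq_abs]
  congr 2
  simp [Complex.mul_re]

lemma cexpG_cont (k : ℕ) (z : ℂ) :
    Continuous (fun t : ℝ => Complex.exp (-z * t) * (Gtail k t : ℂ)) := by
  apply Continuous.mul
  · exact Complex.continuous_exp.comp (continuous_const.mul Complex.continuous_ofReal)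
  · exact Complex.continuous_ofReal.comp (Gtail_continuous k)

lemma main_integrable (k : ℕ) {z : ℂ} (h1 : (k:ℝ) - 1 < -z.re) (h2 : -z.re < k) :
    Integrable (fun t : ℝ => Complex.exp (-z * t) * (Gtail k t : ℂ)) := by
  set f := fun t : ℝ => Complex.exp (-z * t) * (Gtail k t : ℂ) with hf
  have hmeas : AEStronglyMeasurable f volume := (cexpG_cont k z).aestronglyMeasurable
  have hpos : IntegrableOn f (Ioi 0) := by
    apply Integrable.mono' (g := fun t => Real.exp 1 * Real.exp (-((k:ℝ) + z.re) * t))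
    · exact ((exp_neg_integrableOn_Ioi 0 (by linarith)).const_mul _)
    · exact hmeas.restrict
    · rw [ae_restrict_iff' measurableSet_Ioi]
      filter_upwards with t ht
      rw [norm_cexp_mul]
      calc Real.exp (-z.re * t) * |Gtail k t|
          ≤ Real.exp (-z.re * t) * (Real.exp 1 * Real.exp (-(k:ℝ) * t)) :=
            mul_le_mul_of_nonneg_left (Gtail_bound_pos k (le_of_lt ht)) (Real.exp_nonneg _)
        _ = Real.exp 1 * Real.exp (-((k:ℝ) + z.re) * t) := by
            rw [mul_left_comm, ← Real.exp_add]
            congr 1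
            ring
  have hneg : IntegrableOn f (Iic 0) := by
    apply Integrable.mono' (g := fun t => ((k:ℝ)+1) * Real.exp ((-z.re - ((k:ℝ)-1)) * t))
    · exact (integrableOn_exp_mul_Iic' (by linarith) 0).const_mul _
    · exact hmeas.restrict
    · rw [ae_restrict_iff' measurableSet_Iic]
      filter_upwards with t ht
      rw [norm_cexp_mul]
      calc Real.exp (-z.re * t) * |Gtail k t|
          ≤ Real.exp (-z.re * t) * (((k:ℝ)+1) * Real.exp (-((k:ℝ)-1) * t)) :=
            mul_le_mul_of_nonneg_left (Gtail_bound_neg k ht) (Real.exp_nonneg _)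
        _ = ((k:ℝ)+1) * Real.exp ((-z.re - ((k:ℝ)-1)) * t) := by
            rw [mul_left_comm, ← Real.exp_add]
            congr 1
            ring
  have : IntegrableOn f (Iic 0 ∪ Ioi 0) := hneg.union hpos
  rwa [Iic_union_Ioi, integrableOn_univ] at this

lemma main_tendsto_atTop (k : ℕ) {z : ℂ} (h2 : -z.re < k) :
    Tendsto (fun t : ℝ => Complex.exp (-z * t) * (Gtail k t : ℂ)) atTop (𝓝 0) := by
  apply squeeze_zero_norm' (a := fun t => Real.exp 1 * Real.exp (-((k:ℝ) + z.re) * t))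
  · filter_upwards [eventually_ge_atTop (0:ℝ)] with t ht
    rw [norm_cexp_mul]
    calc Real.exp (-z.re * t) * |Gtail k t|
        ≤ Real.exp (-z.re * t) * (Real.exp 1 * Real.exp (-(k:ℝ) * t)) :=
          mul_le_mul_of_nonneg_left (Gtail_bound_pos k ht) (Real.exp_nonneg _)
      _ = Real.exp 1 * Real.exp (-((k:ℝ) + z.re) * t) := by
          rw [mul_left_comm, ← Real.exp_add]; congr 1; ring
  · have hrate : Tendsto (fun t : ℝ => -((k:ℝ) + z.re) * t) atTop atBot := by
      have h' : Tendsto (fun t : ℝ => ((k:ℝ) + z.re) * t) atTop atTop :=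
        Tendsto.const_mul_atTop (by linarith) tendsto_id
      have heq : (fun t : ℝ => -((k:ℝ) + z.re) * t) = (fun x : ℝ => -x) ∘ (fun t : ℝ => ((k:ℝ) + z.re) * t) := by
        funext t; simp only [Function.comp_apply]; ring
      rw [heq]; exact tendsto_neg_atTop_atBot.comp h'
    have := (Real.tendsto_exp_atBot.comp hrate).const_mul (Real.exp 1)
    simpa using this

lemma main_tendsto_atBot (k : ℕ) {z : ℂ} (h1 : (k:ℝ) - 1 < -z.re) :
    Tendsto (fun t : ℝ => Complex.exp (-z * t) * (Gtail k t : ℂ)) atBot (𝓝 0) := by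
  apply squeeze_zero_norm' (a := fun t => ((k:ℝ)+1) * Real.exp ((-z.re - ((k:ℝ)-1)) * t))
  · filter_upwards [eventually_le_atBot (0:ℝ)] with t ht
    rw [norm_cexp_mul]
    calc Real.exp (-z.re * t) * |Gtail k t|
        ≤ Real.exp (-z.re * t) * (((k:ℝ)+1) * Real.exp (-((k:ℝ)-1) * t)) :=
          mul_le_mul_of_nonneg_left (Gtail_bound_neg k ht) (Real.exp_nonneg _)
      _ = ((k:ℝ)+1) * Real.exp ((-z.re - ((k:ℝ)-1)) * t) := by
          rw [mul_left_comm, ← Real.exp_add]; congr 1; ring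
  · have hrate : Tendsto (fun t : ℝ => (-z.re - ((k:ℝ)-1)) * t) atBot atBot := by
      exact Tendsto.const_mul_atBot (by linarith) tendsto_id
    have := (Real.tendsto_exp_atBot.comp hrate).const_mul ((k:ℝ)+1)
    simpa using this

lemma Gamma_eq_base {z : ℂ} (h0 : 0 < z.re) :
    Complex.Gamma z = ∫ t : ℝ, Complex.exp (-z * t) * (Gtail 0 t : ℂ) := by
  rw [Complex.Gamma_eq_integral h0, Complex.GammaIntegral]
  have hinj : InjOn (fun u : ℝ => Real.exp (-u)) univ :=
    (Real.exp_injective.comp neg_injective).injOn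
  have hderiv : ∀ x ∈ (univ : Set ℝ), HasDerivWithinAt (fun u : ℝ => Real.exp (-u))
      (-Real.exp (-x)) univ x := by
    intro x _
    have h := ((hasDerivAt_id x).neg).exp
    have h2 : HasDerivAt (fun u : ℝ => Real.exp (-u)) (-Real.exp (-x)) x := by
      simpa using h
    exact h2.hasDerivWithinAt
  have himg : (fun u : ℝ => Real.exp (-u)) '' univ = Ioi 0 := by
    rw [image_univ]
    rw [show (fun u : ℝ => Real.exp (-u)) = Real.exp ∘ (fun u : ℝ => -u) from rfl]
    rw [Set.range_comp]
    simp [Real.range_exp, neg_surjective.range_eq]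
  have := integral_image_eq_integral_abs_deriv_smul MeasurableSet.univ hderiv hinj
    (fun x : ℝ => ((Real.exp (-x) : ℝ) : ℂ) * (x : ℂ) ^ (z - 1))
  rw [himg] at this
  rw [this, setIntegral_univ]
  congr 1
  funext u
  rw [abs_neg, _root_.abs_of_nonneg (Real.exp_nonneg _)]
  have hpos : (0:ℝ) < Real.exp (-u) := Real.exp_pos _
  have hcpow : ((Real.exp (-u) : ℝ) : ℂ) ^ (z - 1)
      = Complex.exp ((-u : ℂ) * (z - 1)) := by
    rw [Complex.cpow_def_of_ne_zero (by exact_mod_cast hpos.ne')]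
    congr 1
    rw [← Complex.ofReal_log hpos.le, Real.log_exp]
    push_cast
    ring
  have hmerge : Complex.exp (((-u : ℝ)) : ℂ) * Complex.exp ((-u : ℂ) * (z - 1))
      = Complex.exp (-z * u) := by
    rw [← Complex.exp_add]; congr 1; push_cast; ring
  rw [hcpow, Complex.real_smul, Complex.ofReal_exp (x := -u),
    show Gtail 0 u = Real.exp (-Real.exp (-u)) from by simp [Gtail]]
  rw [← hmerge]
  rw [show ((-u : ℝ) : ℂ) = (-u : ℂ) by push_cast; ring]
  ring

lemma ibp_step (k : ℕ) {w : ℂ} (h1 : (k:ℝ) < -w.re) (h2 : -w.re < (k:ℝ)+1) :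
    (∫ t : ℝ, Complex.exp (-(w+1) * t) * (Gtail k t : ℂ))
      = w * ∫ t : ℝ, Complex.exp (-w * t) * (Gtail (k+1) t : ℂ) := by
  set F : ℝ → ℂ := fun t => Complex.exp (-w * t) * (Gtail (k+1) t : ℂ) with hF
  set F' : ℝ → ℂ := fun t => -w * (Complex.exp (-w * t) * (Gtail (k+1) t : ℂ))
      + Complex.exp (-(w+1) * t) * (Gtail k t : ℂ) with hF'
  have hderiv : ∀ t : ℝ, HasDerivAt F (F' t) t := by
    intro t
    have h1' : HasDerivAt (fun t : ℝ => Complex.exp (-w * t)) (-w * Complex.exp (-w * t)) t := by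
      have : HasDerivAt (fun y : ℂ => Complex.exp (-w * y)) (-w * Complex.exp (-w * t)) (t : ℂ) := by
        have := ((hasDerivAt_id (t:ℂ)).const_mul (-w)).cexp
        simpa [mul_comm] using this
      simpa using this.comp_ofReal
    have h2' : HasDerivAt (fun t : ℝ => ((Gtail (k+1) t : ℝ) : ℂ))
        ((Real.exp (-t) * Gtail k t : ℝ) : ℂ) t := (Gtail_hasDerivAt k t).ofReal_comp
    have := h1'.mul h2'
    refine this.congr_deriv (Eq.symm ?_)
    simp only [hF']
    rw [show -(w+1) * (t:ℂ) = -w * t + (-(t:ℂ)) by push_cast; ring, Complex.exp_add]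
    push_cast [Complex.ofReal_exp]
    ring
  have hint1 : Integrable (fun t : ℝ => Complex.exp (-w * t) * (Gtail (k+1) t : ℂ)) :=
    main_integrable (k+1) (by push_cast; linarith) (by push_cast; linarith)
  have hint2 : Integrable (fun t : ℝ => Complex.exp (-(w+1) * t) * (Gtail k t : ℂ)) := by
    have := main_integrable k (z := w + 1) (by simp [Complex.add_re]; linarith)
      (by simp [Complex.add_re]; linarith)
    exact this
  have hintF' : Integrable F' := (hint1.const_mul (-w)).add hint2
  have htop : Tendsto F atTop (𝓝 0) := main_tendsto_atTop (k+1) (by push_cast; linarith)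
  have hbot : Tendsto F atBot (𝓝 0) := main_tendsto_atBot (k+1) (by push_cast; linarith)
  have h0 := MeasureTheory.integral_of_hasDerivAt_of_tendsto hderiv hintF' hbot htop
  rw [sub_zero] at h0
  have hsplit : ∫ t : ℝ, F' t
      = -w * (∫ t : ℝ, Complex.exp (-w * t) * (Gtail (k+1) t : ℂ))
        + ∫ t : ℝ, Complex.exp (-(w+1) * t) * (Gtail k t : ℂ) := by
    rw [hF']
    rw [integral_add (hint1.const_mul (-w)) hint2, integral_const_mul]
  rw [hsplit] at h0
  linear_combination h0

lemma Gamma_claim (k : ℕ) : ∀ z : ℂ, -(k:ℝ) < z.re → z.re < -(k:ℝ) + 1 →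
    Complex.Gamma z = ∫ t : ℝ, Complex.exp (-z * t) * (Gtail k t : ℂ) := by
  induction k with
  | zero =>
    intro z hz1 _
    exact Gamma_eq_base (by simpa using hz1)
  | succ k ih =>
    intro z hz1 hz2
    have hzne : z ≠ 0 := by
      intro h
      rw [h] at hz2
      simp at hz2
      have : (0:ℝ) ≤ (k:ℝ) := Nat.cast_nonneg k
      push_cast at hz2
      linarith
    have hrec := Complex.Gamma_add_one z hzne
    have hIH := ih (z + 1) (by simp [Complex.add_re]; push_cast at hz1 ⊢; linarith)
      (by simp [Complex.add_re]; push_cast at hz2 ⊢; linarith)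
    have hibp := ibp_step k (w := z) (by push_cast at hz2 ⊢; linarith)
      (by push_cast at hz1 ⊢; linarith)
    rw [hIH, hibp] at hrec
    exact mul_left_cancel₀ hzne hrec.symm

/-- Cauchy–Saalschütz representation: on the vertical strip `T_{-n-1,-n}` the Gamma function is
the Laplace transform of `t ↦ ∑_{m>n} ((-1)^m/m!) e^{-mt}`; consequently `(-1)^(n+1) Γ` is
co-positive definite on `T_{-n-1,-n}`. -/
theorem stmt15 (n : ℕ) :
    (∀ z ∈ VStrip ((-(n : ℝ) - 1 : ℝ) : EReal) ((-(n : ℝ) : ℝ) : EReal),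
      Complex.Gamma z =
        ∫ t : ℝ, Complex.exp (-z * t) *
          ((∑' m : ℕ, if n + 1 ≤ m then ((-1) ^ m / (m.factorial : ℝ)) * Real.exp (-(m : ℝ) * t)
            else 0 : ℝ) : ℂ)) ∧
    IsCoPosDefOnC (fun z => (-1) ^ (n + 1) * Complex.Gamma z)
      (VStrip ((-(n : ℝ) - 1 : ℝ) : EReal) ((-(n : ℝ) : ℝ) : EReal)) := by
  have hstrip : ∀ z : ℂ, z ∈ VStrip ((-(n : ℝ) - 1 : ℝ) : EReal) ((-(n : ℝ) : ℝ) : EReal) →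
      -(n : ℝ) - 1 < z.re ∧ z.re < -(n : ℝ) := by
    intro z hzm
    obtain ⟨ha, hb⟩ := hzm
    exact ⟨by exact_mod_cast ha, by exact_mod_cast hb⟩
  have hrepr : ∀ z : ℂ, z ∈ VStrip ((-(n : ℝ) - 1 : ℝ) : EReal) ((-(n : ℝ) : ℝ) : EReal) →
      Complex.Gamma z = ∫ t : ℝ, Complex.exp (-z * t) * (Gtail (n+1) t : ℂ) := by
    intro z hzm
    obtain ⟨ha, hb⟩ := hstrip z hzm
    apply Gamma_claim (n+1) z
    · push_cast; linarith
    · push_cast; linarith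
  constructor
  · intro z hzm
    rw [hrepr z hzm]
    congr 1
    funext t
    rw [tail_eq (n+1) t]
  · intro N z hz ξ
    set k1 := n + 1 with hk1
    set g : Fin N → ℝ → ℂ := fun k t => Complex.exp (-(z k) * t) * ξ k with hg
    set c : ℝ → ℝ := fun t => (-1 : ℝ) ^ k1 * Gtail k1 t with hc
    have hcnn : ∀ t, 0 ≤ c t := fun t => Gtail_nonneg k1 t
    have hbounds : ∀ k l : Fin N, ((k1 : ℝ) - 1 < -(z k + (starRingEnd ℂ) (z l)).re
        ∧ -(z k + (starRingEnd ℂ) (z l)).re < k1) := by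
      intro k l
      obtain ⟨ha, hb⟩ := hstrip _ (hz k l)
      simp only [Complex.add_re, Complex.conj_re] at ha hb
      constructor
      · simp only [hk1, Complex.add_re, Complex.conj_re]; push_cast; linarith
      · simp only [hk1, Complex.add_re, Complex.conj_re]; push_cast; linarith
    have hexp_split : ∀ (k l : Fin N) (t : ℝ),
        Complex.exp (-(z k + (starRingEnd ℂ) (z l)) * t)
          = Complex.exp (-(z k) * t) * (starRingEnd ℂ) (Complex.exp (-(z l) * t)) := by
      intro k l t
      rw [← Complex.exp_conj]
      rw [← Complex.exp_add]
      congr 1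
      rw [map_mul, map_neg, Complex.conj_ofReal]
      ring
    have hterm_eq : ∀ k l : Fin N,
        (fun t : ℝ => g k t * (starRingEnd ℂ) (g l t) * (c t : ℂ))
          = fun t : ℝ => (Complex.exp (-(z k + (starRingEnd ℂ) (z l)) * t) * (Gtail k1 t : ℂ))
              * ((-1 : ℂ) ^ k1 * (ξ k * (starRingEnd ℂ) (ξ l))) := by
      intro k l
      funext t
      rw [hexp_split k l t]
      simp only [hg, hc]
      rw [map_mul]
      push_cast
      ring
    have hint : ∀ k l : Fin N,
        Integrable (fun t : ℝ => g k t * (starRingEnd ℂ) (g l t) * (c t : ℂ)) := by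
      intro k l
      rw [hterm_eq k l]
      exact (main_integrable k1 (hbounds k l).1 (hbounds k l).2).mul_const _
    have hΓval : ∀ k l : Fin N,
        ((-1 : ℂ) ^ k1 * Complex.Gamma (z k + (starRingEnd ℂ) (z l))) * ξ k * (starRingEnd ℂ) (ξ l)
          = ∫ t : ℝ, g k t * (starRingEnd ℂ) (g l t) * (c t : ℂ) := by
      intro k l
      rw [hrepr _ (hz k l)]
      rw [hterm_eq k l]
      rw [integral_mul_const]
      ring
    calc (0 : ℂ) ≤ ((∫ t : ℝ, Complex.normSq (∑ k, g k t) * c t : ℝ) : ℂ) := by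
          rw [Complex.zero_le_real]
          apply integral_nonneg
          intro t
          exact mul_nonneg (Complex.normSq_nonneg _) (hcnn t)
      _ = ∫ t : ℝ, ((Complex.normSq (∑ k, g k t) * c t : ℝ) : ℂ) := (integral_ofReal).symm
      _ = ∫ t : ℝ, ∑ k, ∑ l, g k t * (starRingEnd ℂ) (g l t) * (c t : ℂ) := by
          congr 1
          funext t
          have h1 : (∑ k, g k t) * (starRingEnd ℂ) (∑ l, g l t) * (c t : ℂ)
              = ∑ k, ∑ l, g k t * (starRingEnd ℂ) (g l t) * (c t : ℂ) := by
            rw [map_sum, Finset.sum_mul_sum, Finset.sum_mul]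
            apply Finset.sum_congr rfl
            intro k _
            rw [Finset.sum_mul]
          rw [← h1, Complex.mul_conj]
          push_cast
          ring
      _ = ∑ k, ∫ t : ℝ, ∑ l, g k t * (starRingEnd ℂ) (g l t) * (c t : ℂ) := by
          rw [integral_finset_sum]
          intro k _
          exact integrable_finset_sum _ (fun l _ => hint k l)
      _ = ∑ k, ∑ l, ∫ t : ℝ, g k t * (starRingEnd ℂ) (g l t) * (c t : ℂ) := by
          apply Finset.sum_congr rfl
          intro k _
          rw [integral_finset_sum]
          intro l _
          exact hint k l
      _ = ∑ k, ∑ l, ((-1 : ℂ) ^ k1 * Complex.Gamma (z k + (starRingEnd ℂ) (z l))) * ξ k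
            * (starRingEnd ℂ) (ξ l) := by
          apply Finset.sum_congr rfl
          intro k _
          apply Finset.sum_congr rfl
          intro l _
          exact (hΓval k l).symm
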